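/- For α ∈ [1,2], define f_α(z) = (1/(2α))·(((1+z)/(1-z))^α − 1) for z in the unit disk, where the power uses the principal branch. Then f_α(0) = 0, f_α'(0) = 1, and all Taylor coefficients A_n of f_α at 0 are nonnegative real numbers. -/

import Mathlib

open Metric Set

open FormalMultilinearSeries in
noncomputable def ccSeq (α : ℝ) : ℕ → ℝ
  | 0 => 1
  | 1 => 2 * α
  | (n + 2) => (2 * α * ccSeq α (n + 1) + n * ccSeq α n) / (n + 2)

lemma ccSeq_nonneg (α : ℝ) (hα : 0 ≤ α) : ∀ n, 0 ≤ ccSeq α n := by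
  have H : ∀ n, 0 ≤ ccSeq α n ∧ 0 ≤ ccSeq α (n + 1) := by
    intro n
    induction n with
    | zero =>
      constructor
      · norm_num [ccSeq]
      · show (0:ℝ) ≤ 2 * α; positivity
    | succ n ih =>
      refine ⟨ih.2, ?_⟩
      show 0 ≤ (2 * α * ccSeq α (n + 1) + ↑n * ccSeq α n) / (↑n + 2)
      have h1 := ih.1; have h2 := ih.2
      positivity
  exact fun n => (H n).1

lemma ccSeq_le (α : ℝ) (hα : 0 ≤ α) (hα2 : α ≤ 2) : ∀ n, ccSeq α n ≤ ((n : ℝ) + 1) ^ 4 := by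
  have H : ∀ n, ccSeq α n ≤ ((n : ℝ) + 1) ^ 4 ∧ ccSeq α (n + 1) ≤ ((n : ℝ) + 2) ^ 4 := by
    intro n
    induction n with
    | zero =>
      constructor
      · show (1:ℝ) ≤ _; norm_num
      · show 2 * α ≤ _; push_cast; nlinarith
    | succ n ih =>
      refine ⟨by push_cast; linarith [ih.2], ?_⟩
      show (2 * α * ccSeq α (n + 1) + ↑n * ccSeq α n) / (↑n + 2) ≤ _
      have h1 := ih.1; have h2 := ih.2
      have hn0 : (0:ℝ) ≤ (n:ℝ) := Nat.cast_nonneg n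
      have hc1 := ccSeq_nonneg α hα (n+1)
      have hc0 := ccSeq_nonneg α hα n
      rw [div_le_iff₀ (by positivity)]
      push_cast
      push_cast at h1 h2
      nlinarith [sq_nonneg ((n:ℝ)+1), sq_nonneg ((n:ℝ)+2)]
  exact fun n => (H n).1

lemma ccSeq_rec (α : ℝ) (n : ℕ) :
    ((n:ℝ) + 3) * ccSeq α (n + 3) = 2 * α * ccSeq α (n + 2) + ((n:ℝ) + 1) * ccSeq α (n + 1) := by
  show ((n:ℝ) + 3) * ((2 * α * ccSeq α (n + 1 + 1) + (↑(n+1)) * ccSeq α (n+1)) / (↑(n+1) + 2)) = _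
  push_cast
  field_simp
  ring

lemma rePos {z : ℂ} (hz : z ∈ ball (0:ℂ) 1) : 0 < (((1:ℂ) + z) / (1 - z)).re := by
  have hz1 : Complex.normSq z < 1 := by
    have : ‖z‖ < 1 := by simpa [Complex.dist_eq] using hz
    rw [← Complex.sq_norm]
    nlinarith [norm_nonneg z]
  have hne : (1:ℂ) - z ≠ 0 := by
    intro h
    have : z = 1 := by linear_combination -h
    rw [this] at hz1; simp [Complex.normSq] at hz1
  rw [Complex.div_re]
  have hns : 0 < Complex.normSq (1 - z) := Complex.normSq_pos.2 hne
  have : ((1:ℂ) + z).re * ((1:ℂ) - z).re + ((1:ℂ) + z).im * ((1:ℂ) - z).im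
      = 1 - Complex.normSq z := by
    simp only [Complex.normSq_apply, Complex.add_re, Complex.sub_re, Complex.add_im,
      Complex.sub_im, Complex.one_re, Complex.one_im]
    ring
  rw [← add_div, this]
  exact div_pos (by linarith) hns

lemma onesub_ne {z : ℂ} (hz : z ∈ ball (0:ℂ) 1) : (1:ℂ) - z ≠ 0 := by
  intro h
  have : ‖z‖ < 1 := by simpa [Complex.dist_eq] using hz
  have hz1 : z = 1 := by linear_combination -h
  rw [hz1] at this; simp at this

lemma oneadd_ne {z : ℂ} (hz : z ∈ ball (0:ℂ) 1) : (1:ℂ) + z ≠ 0 := by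
  intro h
  have : ‖z‖ < 1 := by simpa [Complex.dist_eq] using hz
  have hz1 : z = -1 := by linear_combination h
  rw [hz1] at this; simp at this

lemma key (α : ℝ) (hα1 : 1 ≤ α) (hα2 : α ≤ 2) :
    ∀ z ∈ ball (0:ℂ) 1,
      HasSum (fun n : ℕ => (ccSeq α n : ℂ) * z ^ n) (((1 + z) / (1 - z)) ^ (α : ℂ)) := by
  have hα0 : (0:ℝ) ≤ α := le_trans zero_le_one hα1
  set c : ℕ → ℝ := ccSeq α with hc
  set p : FormalMultilinearSeries ℂ ℂ ℂ := FormalMultilinearSeries.ofScalars ℂ (fun n => (c n : ℂ))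
    with hpdef
  set h : ℂ → ℂ := p.sum with hhdef
  -- radius at least 1
  have hrad : 1 ≤ p.radius := by
    apply ENNReal.le_of_forall_nnreal_lt
    intro r hr
    have hr1 : (r : ℝ) < 1 := by exact_mod_cast hr
    apply FormalMultilinearSeries.le_radius_of_summable_norm
    have hs : Summable (fun n : ℕ => ((n:ℝ)+1)^4 * (r:ℝ)^n) := by
      have h4 : ∀ k : ℕ, Summable (fun n : ℕ => (n:ℝ)^k * (r:ℝ)^n) := fun k =>
        summable_pow_mul_geometric_of_norm_lt_one k
          (by rw [Real.norm_eq_abs, abs_of_nonneg r.coe_nonneg]; exact hr1)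
      have := (((((h4 4).add ((h4 3).mul_left 4)).add ((h4 2).mul_left 6)).add
        ((h4 1).mul_left 4)).add (h4 0))
      apply this.congr
      intro n; ring
    apply hs.of_nonneg_of_le
    · intro n; positivity
    · intro n
      rw [FormalMultilinearSeries.ofScalars_norm]
      have h1 : ‖((c n : ℂ))‖ = |c n| := by simp
      rw [h1, abs_of_nonneg (ccSeq_nonneg α hα0 n)]
      have hrn : (0:ℝ) ≤ (r:ℝ)^n := by positivity
      nlinarith [ccSeq_le α hα0 hα2 n]
  have hp : HasFPowerSeriesOnBall h p 0 1 :=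
    (p.hasFPowerSeriesOnBall (lt_of_lt_of_le one_pos hrad)).mono one_pos hrad
  -- coefficients
  have hcoeff : ∀ n, p.coeff n = (c n : ℂ) := by
    intro n
    show (p n) 1 = _
    have := FormalMultilinearSeries.ofScalars_apply_eq (c := fun n => (c n : ℂ)) (1:ℂ) n
    exact (show p.coeff n = _ by rw [hpdef]; simp [FormalMultilinearSeries.coeff_ofScalars])
  have hc0 : c 0 = 1 := rfl
  have hc1 : c 1 = 2 * α := rfl
  -- the ODE satisfied by h on the ball
  have hODE : ∀ z ∈ ball (0:ℂ) 1, deriv h z * (1 - z^2) = 2 * (α:ℂ) * h z := by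
    intro z hz
    have hz' : z ∈ Metric.eball (0:ℂ) 1 := by
      rw [← ENNReal.ofReal_one, Metric.emetric_ball]; exact hz
    have hsum : HasSum (fun n : ℕ => (c n : ℂ) * z ^ n) (h z) := by
      have H := hp.hasSum hz'
      simp only [zero_add] at H
      have e : (fun n => (p n) fun _ => z) = fun n : ℕ => (c n : ℂ) * z^n := by
        funext n
        rw [hpdef, FormalMultilinearSeries.ofScalars_apply_eq, smul_eq_mul]
      rwa [e] at H
    have hsum' : HasSum (fun n : ℕ => ((n:ℂ) + 1) * (c (n+1) : ℂ) * z ^ (n+1))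
        (z * deriv h z) := by
      have H2 : HasSum (fun n => p.derivSeries n fun _ => z) (fderiv ℂ h z) := by
        simpa using hp.fderiv.hasSum hz'
      have H3 : HasSum (fun n => (p.derivSeries n fun _ => z) z) (fderiv ℂ h z z) :=
        H2.mapL (ContinuousLinearMap.apply ℂ ℂ z)
      have e5 : fderiv ℂ h z z = z * deriv h z := by
        have := (fderiv ℂ h z).map_smul z (1:ℂ)
        simpa [fderiv_apply_one_eq_deriv] using this
      rw [e5] at H3
      have e : (fun n => (p.derivSeries n fun _ => z) z)
          = fun n : ℕ => ((n:ℂ) + 1) * (c (n+1) : ℂ) * z ^ (n+1) := by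
        funext n
        rw [p.derivSeries_apply_diag n z, hpdef, FormalMultilinearSeries.ofScalars_apply_eq,
          nsmul_eq_mul, smul_eq_mul]
        push_cast
        ring
      rwa [e] at H3
    -- define the shifted sequence
    set W : ℕ → ℂ := fun k => match k with
      | 0 => 0
      | 1 => 0
      | (k + 2) => z^2 * (((k:ℂ) + 1) * (c (k+1) : ℂ) * z ^ (k+1)) with hW
    have hWsum : HasSum W (z^2 * (z * deriv h z)) := by
      have B := hsum'.mul_left (z^2)
      have eB : (fun n : ℕ => W (n + 2))
          = fun n : ℕ => z^2 * (((n:ℂ) + 1) * (c (n+1) : ℂ) * z ^ (n+1)) := by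
        funext n; rfl
      have H := (hasSum_nat_add_iff (f := W) 2).mp (by rw [eB]; exact B)
      have w0 : W 0 = 0 := rfl
      have w1 : W 1 = 0 := rfl
      simpa [Finset.sum_range_succ, w0, w1] using H
    have hTW : HasSum (fun k : ℕ => ((k:ℂ) + 1) * (c (k+1) : ℂ) * z ^ (k+1) - W k)
        (z * deriv h z - z^2 * (z * deriv h z)) := hsum'.sub hWsum
    have hUsum : HasSum (fun k : ℕ => 2 * (α:ℂ) * (c k : ℂ) * z ^ (k+1))
        (2 * (α:ℂ) * z * h z) := by
      have := hsum.mul_left (2 * (α:ℂ) * z)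
      have e : (fun n : ℕ => 2 * (α:ℂ) * z * ((c n : ℂ) * z^n))
          = fun k : ℕ => 2 * (α:ℂ) * (c k : ℂ) * z ^ (k+1) := by
        funext k; ring
      rwa [e] at this
    have eTU : (fun k : ℕ => ((k:ℂ) + 1) * (c (k+1) : ℂ) * z ^ (k+1) - W k)
        = fun k : ℕ => 2 * (α:ℂ) * (c k : ℂ) * z ^ (k+1) := by
      funext k
      match k with
      | 0 =>
        have w : W 0 = 0 := rfl
        have e1 : c (0 + 1) = 2 * α := hc1
        rw [w, e1, hc0]
        push_cast
        ring
      | 1 =>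
        have w : W 1 = 0 := rfl
        have hc2 : c (1 + 1) = 2 * α * α := by
          show (2 * α * ccSeq α 1 + ((0:ℕ):ℝ) * ccSeq α 0) / (((0:ℕ):ℝ) + 2) = _
          show (2 * α * (2 * α) + ((0:ℕ):ℝ) * 1) / (((0:ℕ):ℝ) + 2) = _
          push_cast
          ring
        rw [w, hc2, hc1]
        push_cast
        ring
      | (k + 2) =>
        have w : W (k+2) = z^2 * (((k:ℂ) + 1) * (c (k+1) : ℂ) * z ^ (k+1)) := rfl
        have hrecC : ((k:ℂ) + 3) * (c (k+3) : ℂ)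
            = 2 * (α:ℂ) * (c (k+2) : ℂ) + ((k:ℂ) + 1) * (c (k+1) : ℂ) := by
          exact_mod_cast congrArg (Complex.ofReal) (ccSeq_rec α k)
        have e4 : c (k + 2 + 1) = c (k + 3) := rfl
        rw [w, e4]
        push_cast
        linear_combination (z ^ (k+3)) * hrecC
    rw [eTU] at hTW
    have hmain : z * deriv h z - z^2 * (z * deriv h z) = 2 * (α:ℂ) * z * h z :=
      hTW.unique hUsum
    rcases eq_or_ne z 0 with rfl | hz0
    · have hd : deriv h 0 = p.coeff 1 := hp.hasFPowerSeriesAt.deriv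
      have hh0 : h 0 = p.coeff 0 := (hp.hasFPowerSeriesAt.coeff_zero fun _ => 1).symm
      rw [hd, hh0, hcoeff, hcoeff, hc1, hc0]
      push_cast
      ring
    · apply mul_left_cancel₀ hz0
      linear_combination hmain
  -- F = w^{-α} h is constant on the ball
  set F : ℂ → ℂ := fun y => ((1 + y) / (1 - y)) ^ (-(α:ℂ)) * h y with hFdef
  have hFd : ∀ z ∈ ball (0:ℂ) 1, HasDerivAt F 0 z := by
    intro z hz
    have hz' : z ∈ Metric.eball (0:ℂ) 1 := by
      rw [← ENNReal.ofReal_one, Metric.emetric_ball]; exact hz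
    have h1 : (1:ℂ) - z ≠ 0 := onesub_ne hz
    have h2 : (1:ℂ) + z ≠ 0 := oneadd_ne hz
    have hwz : ((1:ℂ) + z)/(1 - z) ≠ 0 := div_ne_zero h2 h1
    have hone : (1:ℂ) - z^2 ≠ 0 := by
      have e : (1:ℂ) - z^2 = (1 - z) * (1 + z) := by ring
      rw [e]; exact mul_ne_zero h1 h2
    have hslit : ((1:ℂ)+z)/(1-z) ∈ Complex.slitPlane := Or.inl (rePos hz)
    have hwd : HasDerivAt (fun y : ℂ => (1+y)/(1-y)) (2/(1-z)^2) z := by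
      have d1 : HasDerivAt (fun y : ℂ => 1+y) 1 z := by
        simpa using (hasDerivAt_id z).const_add (1:ℂ)
      have d2 : HasDerivAt (fun y : ℂ => 1-y) (-1) z := by
        simpa using (hasDerivAt_id z).const_sub (1:ℂ)
      have hd := d1.div d2 h1
      refine hd.congr_deriv ?_
      field_simp
      ring
    have hcd : HasDerivAt (fun y : ℂ => ((1+y)/(1-y)) ^ (-(α:ℂ)))
        (-(α:ℂ) * (((1+z)/(1-z)) ^ (-(α:ℂ) - 1)) * (2/(1-z)^2)) z :=
      hwd.cpow_const hslit
    have hhd : HasDerivAt h (deriv h z) z :=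
      ((hp.analyticAt_of_mem hz').differentiableAt).hasDerivAt
    have hFd' := hcd.mul hhd
    refine hFd'.congr_deriv ?_
    have hde : deriv h z = 2*(α:ℂ)*h z / (1-z^2) := by
      rw [eq_div_iff hone]; exact hODE z hz
    have hpow : (((1:ℂ)+z)/(1-z)) ^ (-(α:ℂ) - 1)
        = (((1:ℂ)+z)/(1-z)) ^ (-(α:ℂ)) * ((1-z)/(1+z)) := by
      rw [Complex.cpow_sub _ _ hwz, Complex.cpow_one]
      field_simp
    rw [hde, hpow]
    field_simp
    ring
  have hcon : ∀ z ∈ ball (0:ℂ) 1, F z = F 0 := fun z hz =>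
    (convex_ball (0:ℂ) 1).is_const_of_fderivWithin_eq_zero (𝕜 := ℂ)
      (fun y hy => ((hFd y hy).differentiableAt).differentiableWithinAt)
      (fun y hy => by
        rw [fderivWithin_of_isOpen isOpen_ball hy,
          ((hFd y hy).hasFDerivAt).fderiv]
        ext w
        simp)
      hz (mem_ball_self one_pos)
  have hh0 : h 0 = 1 := by
    have e := (hp.hasFPowerSeriesAt.coeff_zero fun _ => 1).symm
    have e2 : p.coeff 0 = (c 0 : ℂ) := hcoeff 0
    rw [show ((p 0) fun _ => (1:ℂ)) = p.coeff 0 from rfl, e2, hc0] at e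
    simpa using e
  have hF0 : F 0 = 1 := by
    rw [hFdef]
    simp [hh0]
  -- conclude
  intro z hz
  have hz' : z ∈ Metric.eball (0:ℂ) 1 := by
    rw [← ENNReal.ofReal_one, Metric.emetric_ball]; exact hz
  have hsum : HasSum (fun n : ℕ => (c n : ℂ) * z ^ n) (h z) := by
    have H := hp.hasSum hz'
    simp only [zero_add] at H
    have e : (fun n => (p n) fun _ => z) = fun n : ℕ => (c n : ℂ) * z^n := by
      funext n
      rw [hpdef, FormalMultilinearSeries.ofScalars_apply_eq, smul_eq_mul]
    rwa [e] at H
  have hFz : (((1:ℂ)+z)/(1-z)) ^ (-(α:ℂ)) * h z = 1 := by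
    have := hcon z hz
    rw [hF0] at this
    exact this
  have hw0 : ((1:ℂ)+z)/(1-z) ≠ 0 := div_ne_zero (oneadd_ne hz) (onesub_ne hz)
  have hpne : (((1:ℂ)+z)/(1-z)) ^ (α:ℂ) ≠ 0 := fun H =>
    hw0 (Complex.cpow_eq_zero_iff _ _ |>.mp H).1
  have hhz : h z = (((1:ℂ)+z)/(1-z)) ^ (α:ℂ) := by
    rw [Complex.cpow_neg] at hFz
    exact ((inv_mul_eq_one₀ hpne).mp hFz).symm
  rwa [hhz] at hsum

/-- The extremal concave function `f_α(z) = (1/(2α))(((1+z)/(1-z))^α - 1)`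
(principal branch) satisfies `f_α(0) = 0`, `f_α'(0) = 1`, and has nonnegative
real Taylor coefficients at the origin. -/
theorem extremal_concave_coeffs_nonneg (α : ℝ) (hα : α ∈ Icc (1 : ℝ) 2) :
    (fun z : ℂ => (1 / (2 * (α : ℂ))) * (((1 + z) / (1 - z)) ^ (α : ℂ) - 1)) 0 = 0 ∧
    deriv (fun z : ℂ => (1 / (2 * (α : ℂ))) * (((1 + z) / (1 - z)) ^ (α : ℂ) - 1)) 0 = 1 ∧
    ∃ A : ℕ → ℝ, (∀ n, 0 ≤ A n) ∧
      ∀ z ∈ ball (0 : ℂ) 1,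
        HasSum (fun n : ℕ => (A n : ℂ) * z ^ n)
          ((1 / (2 * (α : ℂ))) * (((1 + z) / (1 - z)) ^ (α : ℂ) - 1)) := by
  obtain ⟨hα1, hα2⟩ := hα
  have hα0 : (0:ℝ) ≤ α := le_trans zero_le_one hα1
  have hαne : (α:ℂ) ≠ 0 := by
    simp only [ne_eq, Complex.ofReal_eq_zero]
    intro h; rw [h] at hα1; norm_num at hα1
  have h2αne : (2 * (α:ℂ)) ≠ 0 := mul_ne_zero two_ne_zero hαne
  refine ⟨?_, ?_, ?_⟩
  · norm_num
  · -- the derivative at 0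
    have d1 : HasDerivAt (fun y : ℂ => 1+y) 1 0 := by
      simpa using (hasDerivAt_id (0:ℂ)).const_add (1:ℂ)
    have d2 : HasDerivAt (fun y : ℂ => 1-y) (-1) 0 := by
      simpa using (hasDerivAt_id (0:ℂ)).const_sub (1:ℂ)
    have hne : ((fun y : ℂ => 1-y) 0) ≠ 0 := by norm_num
    have hwd : HasDerivAt (fun y : ℂ => (1+y)/(1-y)) 2 0 := by
      have hd := d1.div d2 hne
      refine hd.congr_deriv ?_
      norm_num
    have hslit : ((1:ℂ)+0)/(1-0) ∈ Complex.slitPlane := by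
      refine Or.inl ?_
      norm_num
    have hcd : HasDerivAt (fun y : ℂ => ((1+y)/(1-y)) ^ (α:ℂ)) (2 * (α:ℂ)) 0 := by
      have hd := hwd.cpow_const (c := (α:ℂ)) hslit
      convert hd using 1
      norm_num [Complex.one_cpow]
      ring
    have hfd : HasDerivAt
        (fun z : ℂ => (1 / (2 * (α : ℂ))) * (((1 + z) / (1 - z)) ^ (α : ℂ) - 1)) 1 0 := by
      have hd := (hcd.sub_const 1).const_mul (1 / (2 * (α:ℂ)))
      refine hd.congr_deriv ?_
      field_simp
    exact hfd.deriv
  · refine ⟨fun n => if n = 0 then 0 else ccSeq α n / (2 * α), fun n => ?_, fun z hz => ?_⟩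
    · dsimp only
      split
      · exact le_refl 0
      · exact div_nonneg (ccSeq_nonneg α hα0 n) (by linarith)
    · have hk := key α hα1 hα2 z hz
      have h1 : HasSum (fun n : ℕ => (1 / (2 * (α:ℂ))) * ((ccSeq α n : ℂ) * z ^ n))
          ((1 / (2 * (α:ℂ))) * (((1 + z) / (1 - z)) ^ (α : ℂ))) := hk.mul_left _
      have h2 : HasSum (fun n : ℕ => if n = 0 then (1 / (2 * (α:ℂ))) else 0)
          (1 / (2 * (α:ℂ))) := hasSum_ite_eq 0 _
      have h3 := h1.sub h2
      have e : (fun n : ℕ => (1 / (2 * (α:ℂ))) * ((ccSeq α n : ℂ) * z ^ n)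
            - (if n = 0 then (1 / (2 * (α:ℂ))) else 0))
          = fun n : ℕ => ((if n = 0 then (0:ℝ) else ccSeq α n / (2 * α) : ℝ) : ℂ) * z ^ n := by
        funext n
        match n with
        | 0 =>
          simp only [if_pos rfl]
          have e0 : ccSeq α 0 = 1 := rfl
          rw [e0]
          push_cast
          ring
        | (n+1) =>
          simp only [if_neg (Nat.succ_ne_zero n)]
          push_cast
          field_simp
          ring
      rw [e] at h3
      rw [show (1 / (2 * (α : ℂ))) * (((1 + z) / (1 - z)) ^ (α : ℂ) - 1) = 1 / (2 * (α : ℂ)) * ((1 + z) / (1 - z)) ^ (α : ℂ) - 1 / (2 * (α : ℂ)) by ring]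
      exact h3
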